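/- Define f(n) := (n/2)·((2n−1)/(2n−3))·3^{n−1}/C(2n,n) for integers n ≥ 2. Then f is strictly decreasing: f(n) > f(n+1) for every integer n ≥ 2. -/

import Mathlib

/-- `f(n) = (n/2)·((2n−1)/(2n−3))·3^{n−1}/C(2n,n)` for integers `n ≥ 2`. -/
noncomputable def f (n : ℕ) : ℝ :=
  ((n : ℝ) / 2) * ((2 * (n : ℝ) - 1) / (2 * (n : ℝ) - 3)) * 3 ^ (n - 1) /
    (Nat.choose (2 * n) n : ℝ)

theorem f_strictly_decreasing (n : ℕ) (hn : 2 ≤ n) : f n > f (n + 1) := by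
  have ha : (2 : ℝ) ≤ (n : ℝ) := by exact_mod_cast hn
  set a : ℝ := (n : ℝ) with hadef
  have hb : (0 : ℝ) < (Nat.choose (2 * n) n : ℝ) := by
    exact_mod_cast Nat.choose_pos (by omega)
  have hc : (0 : ℝ) < (Nat.choose (2 * (n + 1)) (n + 1) : ℝ) := by
    exact_mod_cast Nat.choose_pos (by omega)
  have key : ((n : ℝ) + 1) * (Nat.choose (2 * (n + 1)) (n + 1) : ℝ)
      = 2 * (2 * (n : ℝ) + 1) * (Nat.choose (2 * n) n : ℝ) := by
    have h := Nat.succ_mul_centralBinom_succ n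
    simp only [Nat.centralBinom] at h
    exact_mod_cast h
  have hpow : (0 : ℝ) < (3 : ℝ) ^ (n - 1) := by positivity
  have h3 : (0 : ℝ) < 2 * a - 3 := by linarith
  have h1 : (0 : ℝ) < 2 * a - 1 := by linarith
  have hcc : (Nat.choose (2 * (n + 1)) (n + 1) : ℝ)
      = 2 * (2 * a + 1) * (Nat.choose (2 * n) n : ℝ) / (a + 1) := by
    field_simp
    linarith [key]
  have hexp : n + 1 - 1 = n - 1 + 1 := by omega
  have e1 : f n = a * (2 * a - 1) * 3 ^ (n - 1) / (2 * (2 * a - 3) * (Nat.choose (2 * n) n : ℝ)) := by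
    unfold f
    rw [← hadef]
    field_simp
  have e2 : f (n + 1) = 3 * (a + 1) ^ 2 * 3 ^ (n - 1) / (4 * (2 * a - 1) * (Nat.choose (2 * n) n : ℝ)) := by
    have hY : f (n + 1) = ((a + 1) * (2 * a + 1) * (3 ^ (n - 1) * 3)) /
        (2 * (2 * a - 1) * (Nat.choose (2 * (n + 1)) (n + 1) : ℝ)) := by
      unfold f
      rw [hexp, pow_succ]
      push_cast
      rw [← hadef]
      generalize hg : ((Nat.choose (2 * (n + 1)) (n + 1) : ℕ) : ℝ) = c at hc ⊢
      have hz : 2 * (a + 1) - 3 = 2 * a - 1 := by ring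
      rw [hz, div_eq_div_iff hc.ne' (by positivity)]
      field_simp [h1.ne']
      rw [mul_div_cancel_right₀ _ (by linarith : a * 2 - 1 ≠ 0)]
      ring
    rw [hY, div_eq_div_iff (by positivity) (by positivity)]
    have key' : (a + 1) * (Nat.choose (2 * (n + 1)) (n + 1) : ℝ)
        = 2 * (2 * a + 1) * (Nat.choose (2 * n) n : ℝ) := by rw [hadef]; exact key
    linear_combination (-(6 * (2 * a - 1) * (3:ℝ) ^ (n - 1) * (a + 1))) * key'
  rw [e1, e2, gt_iff_lt, div_lt_div_iff₀ (by positivity) (by positivity)]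
  have hcube : 3 * (a + 1) ^ 2 * (2 * a - 3) < 2 * a * (2 * a - 1) ^ 2 := by
    nlinarith [sq_nonneg (a - 5), mul_nonneg (mul_nonneg (by linarith : (0:ℝ) ≤ a - 2) (by linarith : (0:ℝ) ≤ a - 2)) (by linarith : (0:ℝ) ≤ a - 2)]
  nlinarith [mul_lt_mul_of_pos_left hcube (mul_pos hpow hb)]
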